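/- Let X be an integer-valued random variable whose distribution is symmetric about 0 and such that m ↦ P(|X| = m) is non-increasing on the positive integers. Then for every positive integer γ, P(γ divides X | X ≠ 0) ≤ 1/γ. -/

import Mathlib

/-- Let `X` be an integer-valued random variable (with pmf `p`) whose distribution is
symmetric about `0` and with `m ↦ P(|X| = m)` non-increasing on positive integers,
and `P(X ≠ 0) > 0`. Then for every `γ ≥ 1`,
`P(γ ∣ X | X ≠ 0) ≤ 1/γ`, i.e. `γ · P(γ ∣ X and X ≠ 0) ≤ P(X ≠ 0)`. -/
theorem symmetric_unimodal_dvd_bound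
    (p : ℤ → ℝ) (hp0 : ∀ x, 0 ≤ p x) (hp1 : ∑' x, p x = 1)
    (hsymm : ∀ x : ℤ, p (-x) = p x)
    (hmono : ∀ m : ℤ, 1 ≤ m → p (m + 1) ≤ p m)
    (hne : 0 < 1 - p 0)
    (γ : ℕ) (hγ : 0 < γ) :
    (γ : ℝ) * ∑' x : ℤ, (if (γ : ℤ) ∣ x ∧ x ≠ 0 then p x else 0) ≤ 1 - p 0 := by
  haveI : NeZero γ := ⟨hγ.ne'⟩
  -- summability of p
  have hs : Summable p := by
    by_contra h
    rw [tsum_eq_zero_of_not_summable h] at hp1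
    norm_num at hp1
  -- antitone on positives
  have hanti : ∀ a b : ℤ, 1 ≤ a → a ≤ b → p b ≤ p a := by
    intro a b ha hab
    exact Int.le_induction (motive := fun b _ => p b ≤ p a) (le_refl _)
      (fun n hn ih => le_trans (hmono n (le_trans ha hn)) ih) b hab
  set F : ℤ → ℝ := fun x => if (γ : ℤ) ∣ x ∧ x ≠ 0 then p x else 0 with hFdef
  have hF0 : ∀ x, 0 ≤ F x := by
    intro x; simp only [F]; split <;> [exact hp0 x; exact le_refl 0]
  have hFle : ∀ x, F x ≤ p x := by
    intro x; simp only [F]; split <;> [exact le_refl _; exact hp0 x]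
  have hsF : Summable F := Summable.of_nonneg_of_le hF0 hFle hs
  have hFsymm : ∀ x : ℤ, F (-x) = F x := by
    intro x
    simp only [F, dvd_neg, neg_ne_zero, hsymm]
  -- positive-part series
  set h : ℕ → ℝ := fun n => p ((n : ℤ) + 1) with hhdef
  set g : ℕ → ℝ := fun n => F ((n : ℤ) + 1) with hgdef
  have hinj1 : Function.Injective (fun n : ℕ => (n : ℤ) + 1) := by
    intro a b hab; simpa using hab
  have hsh : Summable h := hs.comp_injective hinj1
  have hsg : Summable g := hsF.comp_injective hinj1
  -- split the integer sums
  have hsplit : ∀ (q : ℤ → ℝ), Summable q → (∀ x, q (-x) = q x) →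
      ∑' x : ℤ, q x = q 0 + 2 * ∑' n : ℕ, q ((n : ℤ) + 1) := by
    intro q hq hqs
    have h1 : Summable fun n : ℕ => q n := hq.comp_injective Nat.cast_injective
    have h2 : (fun n : ℕ => q (-((n : ℤ) + 1))) = fun n : ℕ => q ((n : ℤ) + 1) := by
      funext n; exact hqs _
    have h3 : Summable fun n : ℕ => q (-((n : ℤ) + 1)) := by
      rw [h2]; exact hq.comp_injective hinj1
    rw [tsum_of_nat_of_neg_add_one h1 h3, Summable.tsum_eq_zero_add h1, h2]
    push_cast
    ring
  have hFsum : ∑' x : ℤ, F x = 2 * ∑' n : ℕ, g n := by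
    have := hsplit F hsF hFsymm
    have hF00 : F 0 = 0 := by simp [F]
    rw [this, hF00, zero_add]
  have hpsum : 1 - p 0 = 2 * ∑' n : ℕ, h n := by
    have := hsplit p hs hsymm
    rw [hp1] at this
    linarith
  rw [hFsum, hpsum]
  -- reduce to positive-part inequality
  have key : (γ : ℝ) * ∑' n : ℕ, g n ≤ ∑' n : ℕ, h n := by
    -- rewrite ∑ g as sum over multiples of γ
    set i : ℕ → ℕ := fun k => γ * k + (γ - 1) with hidef
    have hii : Function.Injective i := by
      intro a b hab
      simp only [i] at hab
      exact Nat.eq_of_mul_eq_mul_left hγ (by omega)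
    have hical : ∀ k : ℕ, ((i k : ℤ) + 1) = (γ : ℤ) * ((k : ℤ) + 1) := by
      intro k
      have : i k + 1 = γ * (k + 1) := by
        simp only [i, Nat.mul_succ]; omega
      have := congrArg (fun n : ℕ => (n : ℤ)) this
      push_cast at this
      linarith
    have hgzero : ∀ n ∉ Set.range i, g n = 0 := by
      intro n hn
      simp only [g, F]
      rw [if_neg]
      rintro ⟨⟨m, hm⟩, -⟩
      apply hn
      have hm' : (n : ℤ) + 1 = (γ : ℤ) * m := hm
      have hmpos : 0 < m := by
        by_contra hc
        push_neg at hc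
        nlinarith [Int.natCast_nonneg n, Int.natCast_pos.mpr hγ]
      obtain ⟨m', rfl⟩ : ∃ m' : ℕ, m = (m' : ℤ) + 1 :=
        ⟨(m - 1).toNat, by omega⟩
      refine ⟨m', ?_⟩
      have : ((i m' : ℤ) + 1) = (n : ℤ) + 1 := by rw [hical, ← hm']
      omega
    -- T' = sum over multiples
    have hgi : HasSum (g ∘ i) (∑' n : ℕ, g n) :=
      (hii.hasSum_iff hgzero).mpr hsg.hasSum
    have hgival : (g ∘ i) = fun k : ℕ => p ((γ : ℤ) * ((k : ℤ) + 1)) := by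
      funext k
      simp only [Function.comp, g, F, hical k]
      rw [if_pos]
      constructor
      · exact Dvd.intro _ rfl
      · have : (0 : ℤ) < (γ : ℤ) * ((k : ℤ) + 1) := by positivity
        exact this.ne'
    rw [hgival] at hgi
    have hTeq : ∑' n : ℕ, g n = ∑' k : ℕ, p ((γ : ℤ) * ((k : ℤ) + 1)) := hgi.tsum_eq.symm
    -- block decomposition of ∑ h
    set e : ℕ × Fin γ ≃ ℕ := (Nat.divModEquiv γ).symm with hedef
    have hhe : HasSum (h ∘ e) (∑' n : ℕ, h n) := (e.hasSum_iff).mpr hsh.hasSum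
    set b : ℕ → ℝ := fun k => ∑ j : Fin γ, h (k * γ + (j : ℕ)) with hbdef
    have hb : HasSum b (∑' n : ℕ, h n) := by
      apply hhe.prod_fiberwise
      intro k
      exact hasSum_fintype _
    -- termwise comparison
    have hterm : ∀ k : ℕ, (γ : ℝ) * p ((γ : ℤ) * ((k : ℤ) + 1)) ≤ b k := by
      intro k
      have : (γ : ℝ) * p ((γ : ℤ) * ((k : ℤ) + 1))
          = ∑ _j : Fin γ, p ((γ : ℤ) * ((k : ℤ) + 1)) := by
        rw [Finset.sum_const, Finset.card_univ, Fintype.card_fin, nsmul_eq_mul]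
      rw [this]
      apply Finset.sum_le_sum
      intro j _
      apply hanti
      · linarith [Int.natCast_nonneg (k * γ + (j : ℕ))]
      · have hj : ((j : ℕ) : ℤ) < (γ : ℤ) := by exact_mod_cast j.isLt
        have hcomm : ((k : ℤ)) * (γ : ℤ) = (γ : ℤ) * (k : ℤ) := mul_comm _ _
        have hexp : ((k * γ + (j : ℕ) : ℕ) : ℤ) = (k : ℤ) * (γ : ℤ) + ((j : ℕ) : ℤ) := by
          push_cast; ring
        simp only [h, hexp]
        nlinarith
    -- summability of the multiple series
    have hsmul : Summable fun k : ℕ => p ((γ : ℤ) * ((k : ℤ) + 1)) := hgi.summable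
    calc (γ : ℝ) * ∑' n : ℕ, g n
        = ∑' k : ℕ, (γ : ℝ) * p ((γ : ℤ) * ((k : ℤ) + 1)) := by
          rw [hTeq, tsum_mul_left]
      _ ≤ ∑' k : ℕ, b k := Summable.tsum_le_tsum hterm (hsmul.mul_left _) hb.summable
      _ = ∑' n : ℕ, h n := hb.tsum_eq
  linarith
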